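/- arXiv:1305.3131 — 2 statements merged into one kernel-verified Lean document; each statement's English description precedes it below -/
import Mathlib

section
/- The refined calculus Rf(box, T_{K_m(¬)}) is sound for the logic K_m(¬): every fully expanded Rf(box, T_{K_m(¬)})-tableau for a satisfiable finite set of K_m(¬)-formulas has an open branch (indeed, the refined rule (□) is derivable in T_{K_m(¬)}, so every rule of Rf(box, T_{K_m(¬)}) preserves satisfiability of at least one denominator). -/
set_option autoImplicit false

namespace KmNotTableau

/-- Relation terms of the logic `K_m(¬)`: `α ::= a_1 | … | a_m | ¬α`. -/
inductive RTerm (m : ℕ) : Type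
  | atom : Fin m → RTerm m
  | neg : RTerm m → RTerm m

/-- Formulas of the logic `K_m(¬)`: `φ ::= p | ¬φ | φ∨φ | [α]φ`. -/
inductive Fm (m : ℕ) : Type
  | var : ℕ → Fm m
  | neg : Fm m → Fm m
  | or : Fm m → Fm m → Fm m
  | box : RTerm m → Fm m → Fm m

/-- A `K_m(¬)`-model `M = (W, (R_a)_a, V)` with `W` nonempty. -/
structure KModel (m : ℕ) where
  W : Type
  ne : Nonempty W
  R : Fin m → W → W → Prop
  V : ℕ → W → Prop

/-- Interpretation of relation terms: `R_{¬α} = (W×W) ∖ R_α`. -/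
def KModel.RT {m : ℕ} (M : KModel m) : RTerm m → M.W → M.W → Prop
  | .atom a => M.R a
  | .neg α => fun v w => ¬ M.RT α v w

/-- Satisfaction in a `K_m(¬)`-model. -/
def KModel.sat {m : ℕ} (M : KModel m) : M.W → Fm m → Prop
  | v, .var p => M.V p v
  | v, .neg φ => ¬ M.sat v φ
  | v, .or φ ψ => M.sat v φ ∨ M.sat v ψ
  | v, .box α φ => ∀ w, M.RT α v w → M.sat w φ

/-- A set of formulas is satisfiable if some model and world satisfy all its members. -/
def Satisfiable {m : ℕ} (N : Set (Fm m)) : Prop :=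
  ∃ (M : KModel m) (v : M.W), ∀ φ ∈ N, M.sat v φ

/-- Labels: terms generated from the initial constant `a₀` and Skolem terms `f(α,φ,t)`. -/
inductive Label (m : ℕ) : Type
  | a0 : Label m
  | sk : RTerm m → Fm m → Label m → Label m

/-- Tableau formulas: `T(φ,t)`, `F(φ,t)`, `T_R(α,t,t')`, `F_R(α,t,t')`. -/
inductive TabFm (m : ℕ) : Type
  | T : Fm m → Label m → TabFm m
  | F : Fm m → Label m → TabFm m
  | TR : RTerm m → Label m → Label m → TabFm m
  | FR : RTerm m → Label m → Label m → TabFm m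

/-- The labels occurring in a tableau formula. -/
def TabFm.labels {m : ℕ} : TabFm m → Set (Label m)
  | .T _ t => {t}
  | .F _ t => {t}
  | .TR _ t t' => {t, t'}
  | .FR _ t t' => {t, t'}

/-- The labels occurring in a set of tableau formulas (the initial label `a₀`,
introduced at the root, always counts as occurring). -/
def Lab {m : ℕ} (B : Set (TabFm m)) : Set (Label m) :=
  insert Label.a0 {t | ∃ f ∈ B, t ∈ f.labels}

/-- A calculus: `C s ds` holds if, on a branch whose set of formulas is `s`, some rule
of the calculus is applicable with denominator instances `ds` (a closure rule
application has `ds = []`). -/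
abbrev Calc (m : ℕ) := Set (TabFm m) → List (Set (TabFm m)) → Prop

/-- The root node `{T(φ,a₀) | φ ∈ N}` of a tableau for input `N`. -/
def initial {m : ℕ} (N : Set (Fm m)) : Set (TabFm m) :=
  {f | ∃ φ ∈ N, f = TabFm.T φ Label.a0}

/-- A tableau for input `N` in calculus `C`: a finitely branching tree of sets of tableau
formulas (nodes indexed by positions `List ℕ`, children of `p` being `p ++ [i]`), whose
root is `{T(φ,a₀) | φ ∈ N}`, and such that the children of every node are obtained by
applying a rule of `C`: each child adds one denominator instance to the node's set. -/
structure Tableau (m : ℕ) (C : Calc m) (N : Set (Fm m)) where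
  node : List ℕ → Option (Set (TabFm m))
  rootEq : node [] = some (initial N)
  tree : ∀ (p : List ℕ) (i : ℕ), node (p ++ [i]) ≠ none → node p ≠ none
  step : ∀ (p : List ℕ) (s : Set (TabFm m)), node p = some s →
    (∀ i : ℕ, node (p ++ [i]) = none) ∨
    (∃ ds, C s ds ∧ ∀ i : ℕ, node (p ++ [i]) = (ds[i]?).map (fun d => s ∪ d))

/-- A branch of a tableau: a maximal path from the root (represented by its
set of positions, a maximal chain under the prefix order). -/
structure Branch {m : ℕ} {C : Calc m} {N : Set (Fm m)} (Tb : Tableau m C N) where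
  pos : Set (List ℕ)
  inTree : ∀ p ∈ pos, Tb.node p ≠ none
  chain : ∀ p ∈ pos, ∀ q ∈ pos, p <+: q ∨ q <+: p
  downClosed : ∀ p ∈ pos, ∀ q : List ℕ, q <+: p → q ∈ pos
  maximal : ∀ q : List ℕ, Tb.node q ≠ none → (∀ p ∈ pos, p <+: q ∨ q <+: p) → q ∈ pos

/-- The set of tableau formulas occurring on a branch. -/
def Branch.fmls {m : ℕ} {C : Calc m} {N : Set (Fm m)} {Tb : Tableau m C N}
    (Br : Branch Tb) : Set (TabFm m) :=
  {f | ∃ p ∈ Br.pos, ∃ s, Tb.node p = some s ∧ f ∈ s}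

/-- A branch is open if no closure rule has been applied (is applicable) on it. -/
def Branch.IsOpen {m : ℕ} {C : Calc m} {N : Set (Fm m)} {Tb : Tableau m C N}
    (Br : Branch Tb) : Prop := ¬ C Br.fmls []

/-- A tableau is fully expanded if on every open branch every applicable rule has been
applied, i.e. some denominator instance of the rule is already contained in the branch. -/
def Tableau.Expanded {m : ℕ} {C : Calc m} {N : Set (Fm m)} (Tb : Tableau m C N) : Prop :=
  ∀ Br : Branch Tb, Br.IsOpen → ∀ ds, C Br.fmls ds → ∃ d ∈ ds, d ⊆ Br.fmls

/-- A `K_m(¬)`-model whose domain is (a set of) labels: the model `I(B)` constructed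
from a branch has domain the set of labels occurring in `B`. -/
structure LModel (m : ℕ) where
  R : Fin m → Label m → Label m → Prop
  V : ℕ → Label m → Prop

/-- Interpretation of relation terms in a label model: `R_{¬α}` is the complement. -/
def LModel.RT {m : ℕ} (M : LModel m) : RTerm m → Label m → Label m → Prop
  | .atom a => M.R a
  | .neg α => fun t t' => ¬ M.RT α t t'

/-- Satisfaction in a label model relativised to its domain `D`. -/
def LModel.sat {m : ℕ} (M : LModel m) (D : Set (Label m)) : Label m → Fm m → Prop
  | t, .var p => M.V p t
  | t, .neg φ => ¬ M.sat D t φ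
  | t, .or φ ψ => M.sat D t φ ∨ M.sat D t ψ
  | t, .box α φ => ∀ t' ∈ D, M.RT α t t' → M.sat D t' φ

/-- Every tableau formula of `B` is true in the model `M` with domain `Lab B`:
`T(φ,t) ∈ B` implies `φ` holds at `t`; `F(φ,t) ∈ B` implies `φ` fails at `t`;
`T_R(α,t,t') ∈ B` implies `(t,t') ∈ R_α`; `F_R(α,t,t') ∈ B` implies `(t,t') ∉ R_α`. -/
def Reflects {m : ℕ} (M : LModel m) (B : Set (TabFm m)) : Prop :=
  (∀ φ t, TabFm.T φ t ∈ B → M.sat (Lab B) t φ) ∧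
  (∀ φ t, TabFm.F φ t ∈ B → ¬ M.sat (Lab B) t φ) ∧
  (∀ α t t', TabFm.TR α t t' ∈ B → M.RT α t t') ∧
  (∀ α t t', TabFm.FR α t t' ∈ B → ¬ M.RT α t t')

/-- The calculus `T_{K_m(¬)}`. -/
def TKmNot (m : ℕ) : Calc m := fun s ds =>
  -- (¬⁺) T(¬p,x) / F(p,x)
  (∃ φ x, TabFm.T (.neg φ) x ∈ s ∧ ds = [{TabFm.F φ x}]) ∨
  -- (¬⁻) F(¬p,x) / T(p,x)
  (∃ φ x, TabFm.F (.neg φ) x ∈ s ∧ ds = [{TabFm.T φ x}]) ∨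
  -- (∨⁺) T(p∨q,x) / T(p,x) | T(q,x)
  (∃ φ ψ x, TabFm.T (.or φ ψ) x ∈ s ∧ ds = [{TabFm.T φ x}, {TabFm.T ψ x}]) ∨
  -- (∨⁻) F(p∨q,x) / F(p,x), F(q,x)
  (∃ φ ψ x, TabFm.F (.or φ ψ) x ∈ s ∧ ds = [{TabFm.F φ x, TabFm.F ψ x}]) ∨
  -- (box) T([r]p,x) / F_R(r,x,y) | T(p,y), for any label y occurring on the branch
  (∃ α φ x y, TabFm.T (.box α φ) x ∈ s ∧ y ∈ Lab s ∧
    ds = [{TabFm.FR α x y}, {TabFm.T φ y}]) ∨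
  -- (dia) F([r]p,x) / T_R(r,x,f(r,p,x)), F(p,f(r,p,x))
  (∃ α φ x, TabFm.F (.box α φ) x ∈ s ∧
    ds = [{TabFm.TR α x (Label.sk α φ x), TabFm.F φ (Label.sk α φ x)}]) ∨
  -- closure rules
  (∃ φ x, TabFm.T φ x ∈ s ∧ TabFm.F φ x ∈ s ∧ ds = []) ∨
  (∃ α x y, TabFm.TR α x y ∈ s ∧ TabFm.FR α x y ∈ s ∧ ds = []) ∨
  -- (¬R⁺) T_R(¬r,x,y) / F_R(r,x,y)
  (∃ α x y, TabFm.TR (.neg α) x y ∈ s ∧ ds = [{TabFm.FR α x y}]) ∨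
  -- (¬R⁻) F_R(¬r,x,y) / T_R(r,x,y)
  (∃ α x y, TabFm.FR (.neg α) x y ∈ s ∧ ds = [{TabFm.TR α x y}])

/-- The refined calculus `Rf(box, T_{K_m(¬)})`: `T_{K_m(¬)}` with the rule (box)
replaced by the rule (□): `T([r]p,x), T_R(r,x,y) / T(p,y)`. -/
def RfKmNot (m : ℕ) : Calc m := fun s ds =>
  (∃ φ x, TabFm.T (.neg φ) x ∈ s ∧ ds = [{TabFm.F φ x}]) ∨
  (∃ φ x, TabFm.F (.neg φ) x ∈ s ∧ ds = [{TabFm.T φ x}]) ∨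
  (∃ φ ψ x, TabFm.T (.or φ ψ) x ∈ s ∧ ds = [{TabFm.T φ x}, {TabFm.T ψ x}]) ∨
  (∃ φ ψ x, TabFm.F (.or φ ψ) x ∈ s ∧ ds = [{TabFm.F φ x, TabFm.F ψ x}]) ∨
  -- (□) T([r]p,x), T_R(r,x,y) / T(p,y)
  (∃ α φ x y, TabFm.T (.box α φ) x ∈ s ∧ TabFm.TR α x y ∈ s ∧ ds = [{TabFm.T φ y}]) ∨
  (∃ α φ x, TabFm.F (.box α φ) x ∈ s ∧
    ds = [{TabFm.TR α x (Label.sk α φ x), TabFm.F φ (Label.sk α φ x)}]) ∨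
  (∃ φ x, TabFm.T φ x ∈ s ∧ TabFm.F φ x ∈ s ∧ ds = []) ∨
  (∃ α x y, TabFm.TR α x y ∈ s ∧ TabFm.FR α x y ∈ s ∧ ds = []) ∨
  (∃ α x y, TabFm.TR (.neg α) x y ∈ s ∧ ds = [{TabFm.FR α x y}]) ∨
  (∃ α x y, TabFm.FR (.neg α) x y ∈ s ∧ ds = [{TabFm.TR α x y}])

/-- Truth of a tableau formula in a `K_m(¬)`-model under a label assignment. -/
def Holds {m : ℕ} (M : KModel m) (ι : Label m → M.W) : TabFm m → Prop
  | .T φ t => M.sat (ι t) φ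
  | .F φ t => ¬ M.sat (ι t) φ
  | .TR α t t' => M.RT α (ι t) (ι t')
  | .FR α t t' => ¬ M.RT α (ι t) (ι t')

/-- A global interpretation of labels, choosing witnesses for Skolem labels. -/
noncomputable def interp {m : ℕ} (M : KModel m) (v : M.W) : Label m → M.W
  | .a0 => v
  | .sk α φ t =>
      @dite _ (∃ w, M.RT α (interp M v t) w ∧ ¬ M.sat w φ) (Classical.dec _)
        (fun h => h.choose) (fun _ => v)

lemma step_sound {m : ℕ} (M : KModel m) (v : M.W) (s : Set (TabFm m))
    (ds : List (Set (TabFm m)))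
    (hInv : ∀ f ∈ s, Holds M (interp M v) f) (h : RfKmNot m s ds) :
    ∃ d ∈ ds, ∀ f ∈ d, Holds M (interp M v) f := by
  set ι := interp M v with hι
  rcases h with ⟨φ,x,hm,rfl⟩|⟨φ,x,hm,rfl⟩|⟨φ,ψ,x,hm,rfl⟩|⟨φ,ψ,x,hm,rfl⟩|
    ⟨α,φ,x,y,hm,hm2,rfl⟩|⟨α,φ,x,hm,rfl⟩|⟨φ,x,hm,hm2,rfl⟩|⟨α,x,y,hm,hm2,rfl⟩|
    ⟨α,x,y,hm,rfl⟩|⟨α,x,y,hm,rfl⟩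
  · refine ⟨{TabFm.F φ x}, by simp, ?_⟩
    intro f hf; rw [Set.mem_singleton_iff] at hf; subst hf
    have := hInv _ hm
    simpa [Holds, KModel.sat] using this
  · refine ⟨{TabFm.T φ x}, by simp, ?_⟩
    intro f hf; rw [Set.mem_singleton_iff] at hf; subst hf
    have := hInv _ hm
    simp only [Holds, KModel.sat, not_not] at this ⊢
    exact this
  · have := hInv _ hm
    simp only [Holds, KModel.sat] at this
    rcases this with h1 | h1
    · exact ⟨{TabFm.T φ x}, by simp, by
        intro f hf; rw [Set.mem_singleton_iff] at hf; subst hf; exact h1⟩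
    · exact ⟨{TabFm.T ψ x}, by simp, by
        intro f hf; rw [Set.mem_singleton_iff] at hf; subst hf; exact h1⟩
  · have := hInv _ hm
    simp only [Holds, KModel.sat, not_or] at this
    refine ⟨{TabFm.F φ x, TabFm.F ψ x}, by simp, ?_⟩
    intro f hf
    rcases hf with rfl | hf
    · exact this.1
    · rw [Set.mem_singleton_iff] at hf; subst hf; exact this.2
  · have h1 := hInv _ hm
    have h2 := hInv _ hm2
    simp only [Holds, KModel.sat] at h1 h2
    exact ⟨{TabFm.T φ y}, by simp, by
      intro f hf; rw [Set.mem_singleton_iff] at hf; subst hf; exact h1 _ h2⟩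
  · have h1 := hInv _ hm
    simp only [Holds, KModel.sat] at h1
    push_neg at h1
    have hex : ∃ w, M.RT α (interp M v x) w ∧ ¬ M.sat w φ := h1
    have hsk : ι (Label.sk α φ x) = hex.choose := by
      rw [hι]; simp only [interp]; rw [dif_pos hex]
    refine ⟨{TabFm.TR α x (Label.sk α φ x), TabFm.F φ (Label.sk α φ x)}, by simp, ?_⟩
    intro f hf
    rcases hf with rfl | hf
    · show M.RT α (ι x) (ι (Label.sk α φ x))
      rw [hsk]; exact hex.choose_spec.1
    · rw [Set.mem_singleton_iff] at hf; subst hf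
      show ¬ M.sat (ι (Label.sk α φ x)) φ
      rw [hsk]; exact hex.choose_spec.2
  · exact absurd (hInv _ hm) (hInv _ hm2)
  · exact absurd (hInv _ hm) (hInv _ hm2)
  · have := hInv _ hm
    simp only [Holds, KModel.RT] at this
    exact ⟨{TabFm.FR α x y}, by simp, by
      intro f hf; rw [Set.mem_singleton_iff] at hf; subst hf; exact this⟩
  · have := hInv _ hm
    simp only [Holds, KModel.RT, not_not] at this
    exact ⟨{TabFm.TR α x y}, by simp, by
      intro f hf; rw [Set.mem_singleton_iff] at hf; subst hf; exact this⟩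

/-- A path through the tree following positions satisfying `G`. -/
noncomputable def pathF (G : List ℕ → Prop) : ℕ → Option (List ℕ)
  | 0 => some []
  | n+1 => (pathF G n).bind fun p =>
      @dite _ (∃ i, G (p ++ [i])) (Classical.dec _)
        (fun h => some (p ++ [h.choose])) (fun _ => none)

lemma pathF_length {G : List ℕ → Prop} :
    ∀ {n p}, pathF G n = some p → p.length = n := by
  intro n
  induction n with
  | zero => intro p hp; simp only [pathF, Option.some_inj] at hp; subst hp; rfl
  | succ n ih =>
    intro p hp
    simp only [pathF] at hp
    rcases h : pathF G n with _ | q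
    · rw [h] at hp; simp at hp
    · rw [h] at hp
      simp only [Option.bind_some] at hp
      split_ifs at hp
      simp only [Option.some_inj] at hp
      subst hp
      simp [ih h]

lemma pathF_good {G : List ℕ → Prop} (h0 : G []) :
    ∀ {n p}, pathF G n = some p → G p := by
  intro n
  induction n with
  | zero => intro p hp; simp only [pathF, Option.some_inj] at hp; subst hp; exact h0
  | succ n ih =>
    intro p hp
    simp only [pathF] at hp
    rcases h : pathF G n with _ | q
    · rw [h] at hp; simp at hp
    · rw [h] at hp
      simp only [Option.bind_some] at hp
      split_ifs at hp with hex
      simp only [Option.some_inj] at hp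
      subst hp
      exact hex.choose_spec

lemma pathF_take {G : List ℕ → Prop} :
    ∀ {n p}, pathF G n = some p → ∀ k, k ≤ n → pathF G k = some (p.take k) := by
  intro n
  induction n with
  | zero =>
    intro p hp k hk
    interval_cases k
    simp only [pathF, Option.some_inj] at hp ⊢; subst hp; rfl
  | succ n ih =>
    intro p hp k hk
    simp only [pathF] at hp
    rcases h : pathF G n with _ | q
    · rw [h] at hp; simp at hp
    · rw [h] at hp
      simp only [Option.bind_some] at hp
      split_ifs at hp with hex
      simp only [Option.some_inj] at hp
      subst hp
      rcases Nat.eq_or_lt_of_le hk with rfl | hk'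
      · have hl : (q ++ [hex.choose]).length = n + 1 := by simp [pathF_length h]
        rw [List.take_of_length_le (le_of_eq hl)]
        simp only [pathF, h, Option.bind_some]
        rw [dif_pos hex]
      · have hkn : k ≤ n := Nat.lt_succ_iff.mp hk'
        have := ih h k hkn
        rwa [List.take_append_of_le_length (by rw [pathF_length h]; exact hkn)]

lemma node_pre {m : ℕ} {C : Calc m} {N : Set (Fm m)} (Tb : Tableau m C N) :
    ∀ (r q : List ℕ), Tb.node (q ++ r) ≠ none → Tb.node q ≠ none := by
  intro r
  induction r using List.reverseRecOn with
  | nil => simp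
  | append_singleton r i ih =>
    intro q hq
    exact ih q (Tb.tree (q ++ r) i (by rwa [← List.append_assoc] at hq))

/-- The refined calculus `Rf(box, T_{K_m(¬)})` is sound for the logic
`K_m(¬)`: every fully expanded `Rf(box, T_{K_m(¬)})`-tableau for a satisfiable finite
set of `K_m(¬)`-formulas has an open branch. -/
theorem RfKmNot_sound (m : ℕ) :
    ∀ N : Set (Fm m), N.Finite → Satisfiable N →
      ∀ Tb : Tableau m (RfKmNot m) N, Tb.Expanded → ∃ Br : Branch Tb, Br.IsOpen := by
  intro N _hfin hsat Tb _hexp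
  obtain ⟨M, v, hv⟩ := hsat
  set ι := interp M v with hι
  set G : List ℕ → Prop :=
    fun p => ∃ s, Tb.node p = some s ∧ ∀ f ∈ s, Holds M ι f with hG
  have hG0 : G [] := by
    refine ⟨initial N, Tb.rootEq, ?_⟩
    rintro f ⟨φ, hφ, rfl⟩
    show M.sat (ι Label.a0) φ
    exact hv φ hφ
  have hGstep : ∀ p, G p → (∃ i, Tb.node (p ++ [i]) ≠ none) → ∃ i, G (p ++ [i]) := by
    rintro p ⟨s, hs, hInv⟩ ⟨j, hj⟩
    rcases Tb.step p s hs with hall | ⟨ds, hC, hch⟩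
    · exact absurd (hall j) hj
    · obtain ⟨d, hd, hdInv⟩ := step_sound M v s ds hInv hC
      obtain ⟨i, hlt, hget⟩ := List.mem_iff_getElem.mp hd
      refine ⟨i, s ∪ d, ?_, ?_⟩
      · rw [hch i, List.getElem?_eq_getElem hlt, hget]; rfl
      · rintro f (hf | hf)
        · exact hInv f hf
        · exact hdInv f hf
  -- the branch: positions along the path
  refine ⟨⟨{p | ∃ n, pathF G n = some p}, ?_, ?_, ?_, ?_⟩, ?_⟩
  · rintro p ⟨n, hn⟩
    obtain ⟨s, hs, -⟩ := pathF_good hG0 hn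
    simp [hs]
  · rintro p ⟨np, hp⟩ q ⟨nq, hq⟩
    rcases le_total np nq with h | h
    · left
      have := pathF_take hq np h
      rw [hp] at this
      have : p = q.take np := by simpa using this
      rw [this]; exact List.take_prefix _ _
    · right
      have := pathF_take hp nq h
      rw [hq] at this
      have : q = p.take nq := by simpa using this
      rw [this]; exact List.take_prefix _ _
  · rintro p ⟨n, hp⟩ q hpre
    refine ⟨q.length, ?_⟩
    have hlen : q.length ≤ n := by
      rw [← pathF_length hp]; exact hpre.length_le
    have := pathF_take hp q.length hlen
    rwa [← List.prefix_iff_eq_take.mp hpre] at this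
  · intro q hq hcomp
    rcases ho : pathF G q.length with _ | p
    · -- the path stopped before level |q|
      have hex : ∃ k, pathF G k = none := ⟨q.length, ho⟩
      have hfs := Nat.find_spec hex
      have hk0ne : Nat.find hex ≠ 0 := by
        intro h
        rw [h] at hfs
        simp [pathF] at hfs
      obtain ⟨k1, hk1eq⟩ : ∃ k1, Nat.find hex = k1 + 1 :=
        ⟨Nat.find hex - 1, (Nat.succ_pred_eq_of_ne_zero hk0ne).symm⟩
      have hk1 : pathF G k1 ≠ none := Nat.find_min hex (by omega)
      rcases hp1 : pathF G k1 with _ | p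
      · exact absurd hp1 hk1
      have hnone : pathF G (k1 + 1) = none := hk1eq ▸ hfs
      have hni : ¬ ∃ i, G (p ++ [i]) := by
        intro hex'
        simp only [pathF, hp1, Option.bind_some] at hnone
        rw [dif_pos hex'] at hnone
        exact Option.some_ne_none _ hnone
      have hple : k1 + 1 ≤ q.length := hk1eq ▸ Nat.find_le ho
      have hpmem : p ∈ {p | ∃ n, pathF G n = some p} := ⟨k1, hp1⟩
      rcases hcomp p hpmem with hpq | hqp
      · -- p is a strict prefix of q
        have hlp : p.length = k1 := pathF_length hp1
        have hlt : p.length < q.length := by omega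
        obtain ⟨r, rfl⟩ := hpq
        rcases r with _ | ⟨j, r'⟩
        · simp at hlt
        · exfalso
          apply hni
          apply hGstep p (pathF_good hG0 hp1)
          refine ⟨j, ?_⟩
          apply node_pre Tb r'
          rw [List.append_assoc]
          exact hq
      · exfalso
        have := hqp.length_le
        have hlp : p.length = k1 := pathF_length hp1
        omega
    · -- the path reaches level |q|: p must equal q
      have hpmem : p ∈ {p | ∃ n, pathF G n = some p} := ⟨q.length, ho⟩
      have hlp : p.length = q.length := pathF_length ho
      rcases hcomp p hpmem with hpq | hqp
      · rw [hpq.eq_of_length hlp] at ho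
        exact ⟨q.length, ho⟩
      · rw [← hqp.eq_of_length hlp.symm] at ho
        exact ⟨q.length, ho⟩
  · -- the branch is open
    intro hC
    obtain ⟨d, hd, -⟩ := step_sound M v _ [] (by
      rintro f ⟨p, ⟨n, hn⟩, s, hs, hf⟩
      obtain ⟨s', hs', hInv⟩ := pathF_good hG0 hn
      rw [hs] at hs'
      cases hs'
      exact hInv f hf) hC
    exact absurd hd (List.not_mem_nil (a := d))

end KmNotTableau
end

section
/- The calculus Rf(box, T_{K_m}) extended with the closure rule (irr): T_R(r,x,x) / ⊥ is sound and constructively complete for K_m over the class of models in which every relation R_a is irreflexive: if a finite set N of K_m-formulas is satisfiable in a model with all relations irreflexive then every fully expanded tableau for N in this calculus has an open branch, and from every open branch B of a fully expanded tableau one can construct a K_m-model with all relations irreflexive, with domain the labels of B, in which every tableau formula of B is true. -/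
set_option autoImplicit false

namespace KmTableau

/-- Formulas of the multi-modal logic `K_m`:
`φ ::= p | ¬φ | φ∨φ | [a]φ`, with propositional variables `p : ℕ`
and relational constants `a : Fin m`. -/
inductive Fm (m : ℕ) : Type
  | var : ℕ → Fm m
  | neg : Fm m → Fm m
  | or : Fm m → Fm m → Fm m
  | box : Fin m → Fm m → Fm m

/-- A `K_m`-model `M = (W, (R_a)_a, V)` with `W` nonempty. -/
structure KModel (m : ℕ) where
  W : Type
  ne : Nonempty W
  R : Fin m → W → W → Prop
  V : ℕ → W → Prop

/-- Satisfaction in a `K_m`-model. -/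
def KModel.sat {m : ℕ} (M : KModel m) : M.W → Fm m → Prop
  | v, .var p => M.V p v
  | v, .neg φ => ¬ M.sat v φ
  | v, .or φ ψ => M.sat v φ ∨ M.sat v ψ
  | v, .box a φ => ∀ w, M.R a v w → M.sat w φ

/-- A set of formulas is satisfiable if some model and world satisfy all its members. -/
def Satisfiable {m : ℕ} (N : Set (Fm m)) : Prop :=
  ∃ (M : KModel m) (v : M.W), ∀ φ ∈ N, M.sat v φ

/-- Labels: terms generated from the initial constant `a₀` and Skolem terms `f(a,φ,t)`. -/
inductive Label (m : ℕ) : Type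
  | a0 : Label m
  | sk : Fin m → Fm m → Label m → Label m

/-- Tableau formulas: `T(φ,t)`, `F(φ,t)`, `T_R(a,t,t')`, `F_R(a,t,t')`. -/
inductive TabFm (m : ℕ) : Type
  | T : Fm m → Label m → TabFm m
  | F : Fm m → Label m → TabFm m
  | TR : Fin m → Label m → Label m → TabFm m
  | FR : Fin m → Label m → Label m → TabFm m

/-- The labels occurring in a tableau formula. -/
def TabFm.labels {m : ℕ} : TabFm m → Set (Label m)
  | .T _ t => {t}
  | .F _ t => {t}
  | .TR _ t t' => {t, t'}
  | .FR _ t t' => {t, t'}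

/-- The labels occurring in a set of tableau formulas (the initial label `a₀`,
introduced at the root, always counts as occurring). -/
def Lab {m : ℕ} (B : Set (TabFm m)) : Set (Label m) :=
  insert Label.a0 {t | ∃ f ∈ B, t ∈ f.labels}

/-- A calculus: `C s ds` holds if, on a branch whose set of formulas is `s`, some rule
of the calculus is applicable with denominator instances `ds` (a closure rule
application has `ds = []`). -/
abbrev Calc (m : ℕ) := Set (TabFm m) → List (Set (TabFm m)) → Prop

/-- The root node `{T(φ,a₀) | φ ∈ N}` of a tableau for input `N`. -/
def initial {m : ℕ} (N : Set (Fm m)) : Set (TabFm m) :=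
  {f | ∃ φ ∈ N, f = TabFm.T φ Label.a0}

/-- A tableau for input `N` in calculus `C`: a finitely branching tree of sets of tableau
formulas (nodes indexed by positions `List ℕ`, children of `p` being `p ++ [i]`), whose
root is `{T(φ,a₀) | φ ∈ N}`, and such that the children of every node are obtained by
applying a rule of `C`: each child adds one denominator instance to the node's set. -/
structure Tableau (m : ℕ) (C : Calc m) (N : Set (Fm m)) where
  node : List ℕ → Option (Set (TabFm m))
  rootEq : node [] = some (initial N)
  tree : ∀ (p : List ℕ) (i : ℕ), node (p ++ [i]) ≠ none → node p ≠ none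
  step : ∀ (p : List ℕ) (s : Set (TabFm m)), node p = some s →
    (∀ i : ℕ, node (p ++ [i]) = none) ∨
    (∃ ds, C s ds ∧ ∀ i : ℕ, node (p ++ [i]) = (ds[i]?).map (fun d => s ∪ d))

/-- A branch of a tableau: a maximal path from the root (represented by its
set of positions, a maximal chain under the prefix order). -/
structure Branch {m : ℕ} {C : Calc m} {N : Set (Fm m)} (Tb : Tableau m C N) where
  pos : Set (List ℕ)
  inTree : ∀ p ∈ pos, Tb.node p ≠ none
  chain : ∀ p ∈ pos, ∀ q ∈ pos, p <+: q ∨ q <+: p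
  downClosed : ∀ p ∈ pos, ∀ q : List ℕ, q <+: p → q ∈ pos
  maximal : ∀ q : List ℕ, Tb.node q ≠ none → (∀ p ∈ pos, p <+: q ∨ q <+: p) → q ∈ pos

/-- The set of tableau formulas occurring on a branch. -/
def Branch.fmls {m : ℕ} {C : Calc m} {N : Set (Fm m)} {Tb : Tableau m C N}
    (Br : Branch Tb) : Set (TabFm m) :=
  {f | ∃ p ∈ Br.pos, ∃ s, Tb.node p = some s ∧ f ∈ s}

/-- A branch is open if no closure rule has been applied (is applicable) on it. -/
def Branch.IsOpen {m : ℕ} {C : Calc m} {N : Set (Fm m)} {Tb : Tableau m C N}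
    (Br : Branch Tb) : Prop := ¬ C Br.fmls []

/-- A tableau is fully expanded if on every open branch every applicable rule has been
applied, i.e. some denominator instance of the rule is already contained in the branch. -/
def Tableau.Expanded {m : ℕ} {C : Calc m} {N : Set (Fm m)} (Tb : Tableau m C N) : Prop :=
  ∀ Br : Branch Tb, Br.IsOpen → ∀ ds, C Br.fmls ds → ∃ d ∈ ds, d ⊆ Br.fmls

/-- The calculus `T_{K_m}`. -/
def TKm (m : ℕ) : Calc m := fun s ds =>
  -- (¬⁺) T(¬p,x) / F(p,x)
  (∃ φ x, TabFm.T (.neg φ) x ∈ s ∧ ds = [{TabFm.F φ x}]) ∨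
  -- (¬⁻) F(¬p,x) / T(p,x)
  (∃ φ x, TabFm.F (.neg φ) x ∈ s ∧ ds = [{TabFm.T φ x}]) ∨
  -- (∨⁺) T(p∨q,x) / T(p,x) | T(q,x)
  (∃ φ ψ x, TabFm.T (.or φ ψ) x ∈ s ∧ ds = [{TabFm.T φ x}, {TabFm.T ψ x}]) ∨
  -- (∨⁻) F(p∨q,x) / F(p,x), F(q,x)
  (∃ φ ψ x, TabFm.F (.or φ ψ) x ∈ s ∧ ds = [{TabFm.F φ x, TabFm.F ψ x}]) ∨
  -- (box) T([r]p,x) / F_R(r,x,y) | T(p,y), for any label y occurring on the branch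
  (∃ a φ x y, TabFm.T (.box a φ) x ∈ s ∧ y ∈ Lab s ∧
    ds = [{TabFm.FR a x y}, {TabFm.T φ y}]) ∨
  -- (dia) F([r]p,x) / T_R(r,x,f(r,p,x)), F(p,f(r,p,x))
  (∃ a φ x, TabFm.F (.box a φ) x ∈ s ∧
    ds = [{TabFm.TR a x (Label.sk a φ x), TabFm.F φ (Label.sk a φ x)}]) ∨
  -- closure rules
  (∃ φ x, TabFm.T φ x ∈ s ∧ TabFm.F φ x ∈ s ∧ ds = []) ∨
  (∃ a x y, TabFm.TR a x y ∈ s ∧ TabFm.FR a x y ∈ s ∧ ds = [])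

/-- A `K_m`-model whose domain is (a set of) labels: the model `I(B)` constructed from a
branch has domain the set of labels occurring in `B`. -/
structure LModel (m : ℕ) where
  R : Fin m → Label m → Label m → Prop
  V : ℕ → Label m → Prop

/-- Satisfaction in a label model relativised to its domain `D`. -/
def LModel.sat {m : ℕ} (M : LModel m) (D : Set (Label m)) : Label m → Fm m → Prop
  | t, .var p => M.V p t
  | t, .neg φ => ¬ M.sat D t φ
  | t, .or φ ψ => M.sat D t φ ∨ M.sat D t ψ
  | t, .box a φ => ∀ t' ∈ D, M.R a t t' → M.sat D t' φ

/-- Every tableau formula of `B` is true in the model `M` with domain `Lab B`: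
`T(φ,t) ∈ B` implies `φ` holds at `t`; `F(φ,t) ∈ B` implies `φ` fails at `t`;
`T_R(a,t,t') ∈ B` implies `(t,t') ∈ R_a`; `F_R(a,t,t') ∈ B` implies `(t,t') ∉ R_a`. -/
def Reflects {m : ℕ} (M : LModel m) (B : Set (TabFm m)) : Prop :=
  (∀ φ t, TabFm.T φ t ∈ B → M.sat (Lab B) t φ) ∧
  (∀ φ t, TabFm.F φ t ∈ B → ¬ M.sat (Lab B) t φ) ∧
  (∀ a t t', TabFm.TR a t t' ∈ B → M.R a t t') ∧
  (∀ a t t', TabFm.FR a t t' ∈ B → ¬ M.R a t t')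

/-- The refined calculus `Rf(box, T_{K_m})`: `T_{K_m}` with the rule (box) replaced by
the rule (□): `T([r]p,x), T_R(r,x,y) / T(p,y)`, here further extended with the
closure rule (irr): `T_R(r,x,x) / ⊥`. -/
def RfKmIrr (m : ℕ) : Calc m := fun s ds =>
  (∃ φ x, TabFm.T (.neg φ) x ∈ s ∧ ds = [{TabFm.F φ x}]) ∨
  (∃ φ x, TabFm.F (.neg φ) x ∈ s ∧ ds = [{TabFm.T φ x}]) ∨
  (∃ φ ψ x, TabFm.T (.or φ ψ) x ∈ s ∧ ds = [{TabFm.T φ x}, {TabFm.T ψ x}]) ∨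
  (∃ φ ψ x, TabFm.F (.or φ ψ) x ∈ s ∧ ds = [{TabFm.F φ x, TabFm.F ψ x}]) ∨
  -- (□) T([r]p,x), T_R(r,x,y) / T(p,y)
  (∃ a φ x y, TabFm.T (.box a φ) x ∈ s ∧ TabFm.TR a x y ∈ s ∧ ds = [{TabFm.T φ y}]) ∨
  (∃ a φ x, TabFm.F (.box a φ) x ∈ s ∧
    ds = [{TabFm.TR a x (Label.sk a φ x), TabFm.F φ (Label.sk a φ x)}]) ∨
  (∃ φ x, TabFm.T φ x ∈ s ∧ TabFm.F φ x ∈ s ∧ ds = []) ∨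
  (∃ a x y, TabFm.TR a x y ∈ s ∧ TabFm.FR a x y ∈ s ∧ ds = []) ∨
  -- (irr) T_R(r,x,x) / ⊥
  (∃ a x, TabFm.TR a x x ∈ s ∧ ds = [])



open Classical in
/-- Interpretation of labels in a model, resolving Skolem terms by choice. -/
noncomputable def interp {m : ℕ} (M : KModel m) (v : M.W) : Label m → M.W
  | .a0 => v
  | .sk a φ x =>
      if h : ∃ u, M.R a (interp M v x) u ∧ ¬ M.sat u φ then h.choose
      else interp M v x

/-- Truth of a tableau formula under a label interpretation. -/
def trueθ {m : ℕ} (M : KModel m) (θ : Label m → M.W) : TabFm m → Prop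
  | .T φ t => M.sat (θ t) φ
  | .F φ t => ¬ M.sat (θ t) φ
  | .TR a t t' => M.R a (θ t) (θ t')
  | .FR a t t' => ¬ M.R a (θ t) (θ t')

theorem good_not_closed {m : ℕ} (M : KModel m) (irr : ∀ a w, ¬ M.R a w w)
    (θ : Label m → M.W) {s : Set (TabFm m)} (hs : ∀ f ∈ s, trueθ M θ f) :
    ¬ RfKmIrr m s [] := by
  rintro (⟨φ,x,hx,h⟩|⟨φ,x,hx,h⟩|⟨φ,ψ,x,hx,h⟩|⟨φ,ψ,x,hx,h⟩|⟨a,φ,x,y,hx,hy,h⟩|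
    ⟨a,φ,x,hx,h⟩|⟨φ,x,hT,hF,-⟩|⟨a,x,y,hT,hF,-⟩|⟨a,x,hT,-⟩)
  · exact nomatch h
  · exact nomatch h
  · exact nomatch h
  · exact nomatch h
  · exact nomatch h
  · exact nomatch h
  · exact (hs _ hF) (hs _ hT)
  · exact (hs _ hF) (hs _ hT)
  · exact irr a (θ x) (hs _ hT)

theorem good_step {m : ℕ} (M : KModel m) (v : M.W) {s : Set (TabFm m)}
    (hs : ∀ f ∈ s, trueθ M (interp M v) f) {ds : List (Set (TabFm m))}
    (h : RfKmIrr m s ds) (hne : ds ≠ []) :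
    ∃ d ∈ ds, ∀ f ∈ d, trueθ M (interp M v) f := by
  rcases h with ⟨φ,x,hx,rfl⟩|⟨φ,x,hx,rfl⟩|⟨φ,ψ,x,hx,rfl⟩|⟨φ,ψ,x,hx,rfl⟩|
    ⟨a,φ,x,y,hx,hy,rfl⟩|⟨a,φ,x,hx,rfl⟩|⟨φ,x,hT,hF,rfl⟩|⟨a,x,y,hT,hF,rfl⟩|⟨a,x,hT,rfl⟩
  · refine ⟨_, List.mem_singleton.2 rfl, ?_⟩
    rintro f rfl
    exact hs (TabFm.T (Fm.neg φ) x) hx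
  · refine ⟨_, List.mem_singleton.2 rfl, ?_⟩
    rintro f rfl
    have h1 : ¬ ¬ M.sat (interp M v x) φ := hs (TabFm.F (Fm.neg φ) x) hx
    exact not_not.1 h1
  · have h1 : M.sat (interp M v x) φ ∨ M.sat (interp M v x) ψ :=
      hs (TabFm.T (Fm.or φ ψ) x) hx
    rcases h1 with h1 | h2
    · exact ⟨_, List.mem_cons_self, by rintro f rfl; exact h1⟩
    · exact ⟨_, List.mem_cons_of_mem _ (List.mem_singleton.2 rfl),
        by rintro f rfl; exact h2⟩
  · refine ⟨_, List.mem_singleton.2 rfl, ?_⟩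
    have h1 : ¬ (M.sat (interp M v x) φ ∨ M.sat (interp M v x) ψ) :=
      hs (TabFm.F (Fm.or φ ψ) x) hx
    rintro f (rfl | rfl)
    · exact fun hh => h1 (Or.inl hh)
    · exact fun hh => h1 (Or.inr hh)
  · -- (□)
    refine ⟨_, List.mem_singleton.2 rfl, ?_⟩
    rintro f rfl
    exact (hs (TabFm.T (Fm.box a φ) x) hx) (interp M v y) (hs (TabFm.TR a x y) hy)
  · -- (dia)
    refine ⟨_, List.mem_singleton.2 rfl, ?_⟩
    have hb : ¬ M.sat (interp M v x) (Fm.box a φ) := hs (TabFm.F (Fm.box a φ) x) hx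
    have hex : ∃ u, M.R a (interp M v x) u ∧ ¬ M.sat u φ := by
      by_contra hno
      push_neg at hno
      exact hb (fun w hw => hno w hw)
    have hsk : interp M v (Label.sk a φ x) = hex.choose := by
      rw [interp, dif_pos hex]
    rintro f (rfl | rfl)
    · show M.R a (interp M v x) (interp M v (Label.sk a φ x))
      rw [hsk]; exact hex.choose_spec.1
    · show ¬ M.sat (interp M v (Label.sk a φ x)) φ
      rw [hsk]; exact hex.choose_spec.2
  · exact absurd rfl hne
  · exact absurd rfl hne
  · exact absurd rfl hne

theorem node_ne_of_prefix {m : ℕ} {C : Calc m} {N : Set (Fm m)} (Tb : Tableau m C N)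
    {p q : List ℕ} (h : p <+: q) (hq : Tb.node q ≠ none) : Tb.node p ≠ none := by
  obtain ⟨r, rfl⟩ := h
  induction r using List.reverseRecOn with
  | nil => rw [List.append_nil] at hq; exact hq
  | append_singleton r i ih =>
      rw [← List.append_assoc] at hq
      exact ih (Tb.tree _ i hq)

theorem subset_of_prefix {m : ℕ} {C : Calc m} {N : Set (Fm m)} (Tb : Tableau m C N)
    {p q : List ℕ} {s s' : Set (TabFm m)} (h : p <+: q)
    (hp : Tb.node p = some s) (hq : Tb.node q = some s') : s ⊆ s' := by
  obtain ⟨r, rfl⟩ := h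
  induction r using List.reverseRecOn generalizing s' with
  | nil =>
      rw [List.append_nil, hp] at hq
      cases hq; exact fun _ h => h
  | append_singleton r i ih =>
      rw [← List.append_assoc] at hq
      have hmid : Tb.node (p ++ r) ≠ none := Tb.tree _ i (by rw [hq]; simp)
      obtain ⟨s'', hs''⟩ := Option.ne_none_iff_exists'.1 hmid
      rcases Tb.step _ _ hs'' with hnone | ⟨ds, _, hch⟩
      · rw [hnone i] at hq; exact absurd hq (by simp)
      · have hthis := hch i
        rw [hq] at hthis
        rcases h2 : ds[i]? with _ | d
        · rw [h2] at hthis; exact absurd hthis.symm (by simp)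
        · rw [h2] at hthis
          simp only [Option.map_some] at hthis
          cases hthis
          exact (ih hs'').trans Set.subset_union_left

open Classical in
/-- A path through the tree, always moving to a child satisfying `Good` if possible. -/
noncomputable def goodPath (Good : List ℕ → Prop) : ℕ → List ℕ
  | 0 => []
  | n+1 =>
      if h : ∃ i, Good (goodPath Good n ++ [i]) then goodPath Good n ++ [h.choose]
      else goodPath Good n

theorem goodPath_mono (Good : List ℕ → Prop) {n n' : ℕ} (h : n ≤ n') :
    goodPath Good n <+: goodPath Good n' := by
  induction h with
  | refl => exact List.prefix_refl _
  | step h ih =>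
      refine ih.trans ?_
      rw [goodPath]
      split
      · exact List.prefix_append _ _
      · exact List.prefix_refl _

theorem goodPath_good (Good : List ℕ → Prop) (h0 : Good []) (n : ℕ) :
    Good (goodPath Good n) := by
  induction n with
  | zero => exact h0
  | succ n ih =>
      rw [goodPath]
      split
      · next h => exact h.choose_spec
      · exact ih

theorem goodPath_succ_length (Good : List ℕ → Prop) (n : ℕ)
    (h : ∃ i, Good (goodPath Good n ++ [i])) :
    (goodPath Good (n+1)).length = (goodPath Good n).length + 1 := by
  rw [goodPath, dif_pos h]
  simp

theorem part1 {m : ℕ} (N : Set (Fm m))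
    (hsat : ∃ (M : KModel m) (v : M.W), (∀ (a : Fin m) (w : M.W), ¬ M.R a w w) ∧
      ∀ φ ∈ N, M.sat v φ)
    (Tb : Tableau m (RfKmIrr m) N) : ∃ Br : Branch Tb, Br.IsOpen := by
  obtain ⟨M, v, hirr, hN⟩ := hsat
  set Good : List ℕ → Prop :=
    fun p => ∃ s, Tb.node p = some s ∧ ∀ f ∈ s, trueθ M (interp M v) f with hGoodDef
  -- root is good
  have hroot : Good [] := by
    refine ⟨initial N, Tb.rootEq, ?_⟩
    rintro g ⟨φ, hφ, rfl⟩
    show M.sat (interp M v Label.a0) φ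
    exact hN φ hφ
  -- if a good node has a child, it has a good child
  have hstep : ∀ p, Good p → ∀ j, Tb.node (p ++ [j]) ≠ none → ∃ i, Good (p ++ [i]) := by
    rintro p ⟨s, hps, hs⟩ j hj
    rcases Tb.step p s hps with hnone | ⟨ds, hC, hch⟩
    · exact absurd (hnone j) hj
    · have hdsne : ds ≠ [] := by
        rintro rfl
        exact hj (by simpa using hch j)
      obtain ⟨d, hd, hdg⟩ := good_step M v hs hC hdsne
      obtain ⟨i, hi⟩ := List.mem_iff_getElem?.1 hd
      refine ⟨i, s ∪ d, ?_, ?_⟩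
      · rw [hch i, hi]; rfl
      · rintro g (hg | hg)
        · exact hs _ hg
        · exact hdg _ hg
  have hGoodn : ∀ n, Good (goodPath Good n) := goodPath_good Good hroot
  have hfmono : ∀ {n n' : ℕ}, n ≤ n' → goodPath Good n <+: goodPath Good n' :=
    fun h => goodPath_mono Good h
  refine ⟨⟨{p | ∃ n, p <+: goodPath Good n}, ?_, ?_, ?_, ?_⟩, ?_⟩
  · rintro p ⟨n, hpn⟩
    obtain ⟨s, hn, -⟩ := hGoodn n
    exact node_ne_of_prefix Tb hpn (by rw [hn]; simp)
  · rintro p ⟨n, hpn⟩ q ⟨n', hqn⟩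
    rcases le_total n n' with h | h
    · exact List.prefix_or_prefix_of_prefix (hpn.trans (hfmono h)) hqn
    · exact List.prefix_or_prefix_of_prefix hpn (hqn.trans (hfmono h))
  · rintro p ⟨n, hpn⟩ q hqp
    exact ⟨n, hqp.trans hpn⟩
  · intro q hq hcomp
    by_contra hqnot
    have hstrict : ∀ n, goodPath Good n <+: q ∧ goodPath Good n ≠ q := by
      intro n
      have hn : goodPath Good n ∈ {p | ∃ n, p <+: goodPath Good n} :=
        ⟨n, List.prefix_refl _⟩
      rcases hcomp _ hn with h | h
      · exact ⟨h, fun he => hqnot ⟨n, he ▸ List.prefix_refl _⟩⟩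
      · exact absurd ⟨n, h⟩ hqnot
    have hlen : ∀ n, n ≤ (goodPath Good n).length := by
      intro n
      induction n with
      | zero => exact Nat.zero_le _
      | succ n ih =>
          obtain ⟨⟨r, hr⟩, hne⟩ := hstrict n
          have hrne : r ≠ [] := by rintro rfl; exact hne (by simpa using hr)
          obtain ⟨j, r', rfl⟩ := List.exists_cons_of_ne_nil hrne
          have hchild : Tb.node (goodPath Good n ++ [j]) ≠ none := by
            refine node_ne_of_prefix Tb ⟨r', ?_⟩ hq
            rw [← hr]; simp
          obtain ⟨i, hi⟩ := hstep _ (hGoodn n) j hchild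
          have hl := goodPath_succ_length Good n ⟨i, hi⟩
          omega
    obtain ⟨⟨r, hr⟩, -⟩ := hstrict (q.length + 1)
    have h1 := hlen (q.length + 1)
    have h2 : (goodPath Good (q.length + 1)).length ≤ q.length :=
      List.IsPrefix.length_le ⟨r, hr⟩
    omega
  · -- openness
    intro hcl
    refine good_not_closed M hirr (interp M v) ?_ hcl
    rintro g ⟨p, ⟨n, hpn⟩, s, hps, hgs⟩
    obtain ⟨sn, hsn, hgn⟩ := hGoodn n
    exact hgn _ (subset_of_prefix Tb hpn hps hsn hgs)

theorem part2 {m : ℕ} (N : Set (Fm m)) (Tb : Tableau m (RfKmIrr m) N)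
    (hexp : Tb.Expanded) (Br : Branch Tb) (hopen : Br.IsOpen) :
    ∃ M : LModel m, (∀ (a : Fin m), ∀ t ∈ Lab Br.fmls, ¬ M.R a t t) ∧
      Reflects M Br.fmls := by
  set B := Br.fmls with hB
  have E : ∀ ds, RfKmIrr m B ds → ∃ d ∈ ds, d ⊆ B := hexp Br hopen
  have hop : ¬ RfKmIrr m B [] := hopen
  set M : LModel m := ⟨fun a t t' => TabFm.TR a t t' ∈ B,
    fun p t => TabFm.T (Fm.var p) t ∈ B⟩ with hM
  have E1 : ∀ d : Set (TabFm m), RfKmIrr m B [d] → d ⊆ B := by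
    intro d h
    obtain ⟨d', hd', hsub⟩ := E [d] h
    rw [List.mem_singleton] at hd'
    exact hd' ▸ hsub
  have main : ∀ (φ : Fm m) (t : Label m),
      (TabFm.T φ t ∈ B → M.sat (Lab B) t φ) ∧
      (TabFm.F φ t ∈ B → ¬ M.sat (Lab B) t φ) := by
    intro φ
    induction φ with
    | var p =>
        intro t
        refine ⟨fun h => h, fun h hsat => ?_⟩
        exact hop (Or.inr (Or.inr (Or.inr (Or.inr (Or.inr (Or.inr
          (Or.inl ⟨Fm.var p, t, hsat, h, rfl⟩)))))))
    | neg φ ih =>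
        intro t
        constructor
        · intro h
          have hr : RfKmIrr m B [{TabFm.F φ t}] := Or.inl ⟨φ, t, h, rfl⟩
          have h1 := E1 _ hr (Set.mem_singleton _)
          exact (ih t).2 h1
        · intro h
          have hr : RfKmIrr m B [{TabFm.T φ t}] := Or.inr (Or.inl ⟨φ, t, h, rfl⟩)
          have h1 := E1 _ hr (Set.mem_singleton _)
          exact fun hn => hn ((ih t).1 h1)
    | or φ ψ ih1 ih2 =>
        intro t
        constructor
        · intro h
          have hr : RfKmIrr m B [{TabFm.T φ t}, {TabFm.T ψ t}] :=
            Or.inr (Or.inr (Or.inl ⟨φ, ψ, t, h, rfl⟩))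
          obtain ⟨d, hd, hsub⟩ := E _ hr
          rw [List.mem_cons, List.mem_singleton] at hd
          rcases hd with hd | hd
          · exact Or.inl ((ih1 t).1 (hsub (hd ▸ Set.mem_singleton _)))
          · exact Or.inr ((ih2 t).1 (hsub (hd ▸ Set.mem_singleton _)))
        · intro h
          have hr : RfKmIrr m B [{TabFm.F φ t, TabFm.F ψ t}] :=
            Or.inr (Or.inr (Or.inr (Or.inl ⟨φ, ψ, t, h, rfl⟩)))
          have hsub := E1 _ hr
          have h1 := (ih1 t).2 (hsub (Set.mem_insert _ _))
          have h2 := (ih2 t).2 (hsub (Set.mem_insert_of_mem _ rfl))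
          rintro (hc | hc)
          · exact h1 hc
          · exact h2 hc
    | box a φ ih =>
        intro t
        constructor
        · intro h t' ht' hR
          have hr : RfKmIrr m B [{TabFm.T φ t'}] :=
            Or.inr (Or.inr (Or.inr (Or.inr (Or.inl ⟨a, φ, t, t', h, hR, rfl⟩))))
          exact (ih t').1 (E1 _ hr (Set.mem_singleton _))
        · intro h hsat
          have hr : RfKmIrr m B
              [{TabFm.TR a t (Label.sk a φ t), TabFm.F φ (Label.sk a φ t)}] :=
            Or.inr (Or.inr (Or.inr (Or.inr (Or.inr (Or.inl ⟨a, φ, t, h, rfl⟩)))))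
          have hsub := E1 _ hr
          have hTR : TabFm.TR a t (Label.sk a φ t) ∈ B := hsub (Set.mem_insert _ _)
          have hF : TabFm.F φ (Label.sk a φ t) ∈ B := hsub (Set.mem_insert_of_mem _ rfl)
          have hmem : Label.sk a φ t ∈ Lab B :=
            Or.inr ⟨TabFm.TR a t (Label.sk a φ t), hTR, Set.mem_insert_of_mem _ rfl⟩
          exact ((ih _).2 hF) (hsat _ hmem hTR)
  refine ⟨M, ?_, ?_, ?_, ?_, ?_⟩
  · intro a t _ hR
    exact hop (Or.inr (Or.inr (Or.inr (Or.inr (Or.inr (Or.inr (Or.inr (Or.inr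
      ⟨a, t, hR, rfl⟩))))))))
  · exact fun φ t h => (main φ t).1 h
  · exact fun φ t h => (main φ t).2 h
  · exact fun a t t' h => h
  · intro a t t' hFR hTR
    exact hop (Or.inr (Or.inr (Or.inr (Or.inr (Or.inr (Or.inr (Or.inr (Or.inl
      ⟨a, t, t', hTR, hFR, rfl⟩))))))))

/-- The calculus `Rf(box, T_{K_m})` extended with the closure rule
(irr): `T_R(r,x,x) / ⊥` is sound and constructively complete for `K_m` over the class of
models in which every relation `R_a` is irreflexive: if a finite set `N` of
`K_m`-formulas is satisfiable in a model with all relations irreflexive then every fully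
expanded tableau for `N` in this calculus has an open branch, and from every open branch
`B` of a fully expanded tableau one can construct a `K_m`-model with all relations
irreflexive, with domain the labels of `B`, in which every tableau formula of `B` is
true. -/
theorem RfKmIrr_sound_and_constructively_complete (m : ℕ) :
    (∀ N : Set (Fm m), N.Finite →
      (∃ (M : KModel m) (v : M.W), (∀ (a : Fin m) (w : M.W), ¬ M.R a w w) ∧
        ∀ φ ∈ N, M.sat v φ) →
      ∀ Tb : Tableau m (RfKmIrr m) N, Tb.Expanded → ∃ Br : Branch Tb, Br.IsOpen) ∧
    (∀ (N : Set (Fm m)) (Tb : Tableau m (RfKmIrr m) N), Tb.Expanded →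
      ∀ Br : Branch Tb, Br.IsOpen →
        ∃ M : LModel m, (∀ (a : Fin m), ∀ t ∈ Lab Br.fmls, ¬ M.R a t t) ∧
          Reflects M Br.fmls) := by
  exact ⟨fun N _ hsat Tb _ => part1 N hsat Tb,
    fun N Tb hexp Br hopen => part2 N Tb hexp Br hopen⟩

end KmTableau
end
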